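/- For n ≥ 2, the number of 2-Jacobi subsets of S_n equals 2^{(n−1)!·(n−1)}. -/

import Mathlib

/-- The left-normed Lie bracket `[a₁,…,aₘ]` of a list of elements of a Lie ring,
defined by `[a₁] = a₁` and `[a₁,…,aₘ] = [[a₁,…,a_{m-1}], aₘ]` (and `0` for the empty list). -/
def lieWord {L : Type*} [LieRing L] : List L → L
  | [] => 0
  | x :: xs => xs.foldl (fun a b => ⁅a, b⁆) x

/-- A subset `T ⊆ Sₙ` is 2-Jacobi if `∑_{σ ∈ T} [a_{σ(1)},…,a_{σ(n)}] = 0` for all elements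
`a₁,…,aₙ` of any Lie algebra over the field `ℤ/2`. -/
def Is2Jacobi {n : ℕ} (T : Set (Equiv.Perm (Fin n))) : Prop :=
  ∀ (L : Type) [LieRing L] [Module (ZMod 2) L] [LieAlgebra (ZMod 2) L], ∀ a : Fin n → L,
    ∑ᶠ σ ∈ T, lieWord (List.ofFn fun i => a (σ i)) = 0

namespace TwoJacobi


variable {L : Type*} [LieRing L]

lemma lieWord_concat (l : List L) (hl : l ≠ []) (c : L) :
    lieWord (l ++ [c]) = ⁅lieWord l, c⁆ := by
  cases l with
  | nil => simp at hl
  | cons x xs => simp [lieWord, List.foldl_append]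

variable {R : Type*} [CommRing R] [LieAlgebra R L]

lemma span_lie_subset (S : Set L) (c : L) :
    ∀ y ∈ Submodule.span R S, ⁅y, c⁆ ∈ Submodule.span R {z | ∃ s ∈ S, z = ⁅s, c⁆} := by
  intro y hy
  induction hy using Submodule.span_induction with
  | mem x hx => exact Submodule.subset_span ⟨x, hx, rfl⟩
  | zero => simp
  | add x y _ _ hx hy => rw [add_lie]; exact add_mem hx hy
  | smul r x _ hx => rw [smul_lie]; exact Submodule.smul_mem _ r hx

variable {α : Type*}

lemma lieWord_map_concat (f : α → L) (l : List α) (hl : l ≠ []) (c : α) :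
    lieWord ((l ++ [c]).map f) = ⁅lieWord (l.map f), f c⁆ := by
  rw [List.map_append]
  exact lieWord_concat (l.map f) (by simpa using hl) (f c)

lemma lie_lieWord_mem_span (f : α → L) :
    ∀ (ys xs : List α), xs ≠ [] →
      ⁅lieWord (xs.map f), lieWord (ys.map f)⁆ ∈
        Submodule.span R {x | ∃ w, w.Perm ys ∧ x = lieWord ((xs ++ w).map f)} := by
  intro ys
  induction ys using List.reverseRecOn with
  | nil => intro xs _; simp [lieWord]
  | append_singleton u c ih =>
    intro xs hxs
    rcases eq_or_ne u [] with rfl | hu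
    · simp only [List.nil_append]
      have h1 : lieWord ([c].map f) = f c := rfl
      rw [h1, ← lieWord_map_concat f xs hxs c]
      exact Submodule.subset_span ⟨[c], List.Perm.refl _, rfl⟩
    · rw [lieWord_map_concat f u hu c, leibniz_lie]
      apply add_mem
      · have h2 := span_lie_subset (R := R) _ (f c) _ (ih xs hxs)
        refine Submodule.span_mono ?_ h2
        rintro z ⟨s, ⟨w, hw, rfl⟩, rfl⟩
        refine ⟨w ++ [c], hw.append_right [c], ?_⟩
        rw [← List.append_assoc]
        exact (lieWord_map_concat f (xs ++ w) (by simp [hxs]) c).symm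
      · rw [← lie_skew]
        apply neg_mem
        rw [← lieWord_map_concat f xs hxs c]
        have h1 := ih (xs ++ [c]) (by simp)
        refine Submodule.span_mono ?_ h1
        rintro z ⟨w, hw, rfl⟩
        exact ⟨c :: w, (hw.cons c).trans (List.perm_append_singleton c u).symm,
          by simp⟩

lemma lieWord_mem_span_head (f : α → L) (a : α) :
    ∀ (s p : List α), lieWord ((p ++ a :: s).map f) ∈
      Submodule.span R {x | ∃ w, w.Perm (p ++ s) ∧ x = lieWord ((a :: w).map f)} := by
  intro s
  induction s using List.reverseRecOn with
  | nil =>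
    intro p
    rcases eq_or_ne p [] with rfl | hp
    · exact Submodule.subset_span ⟨[], by simp, by simp⟩
    · rw [show p ++ [a] = p ++ [a] from rfl, lieWord_map_concat f p hp a, ← lie_skew]
      apply neg_mem
      have h1 : f a = lieWord ([a].map f) := rfl
      rw [h1]
      have h := lie_lieWord_mem_span (R := R) f p [a] (by simp)
      refine Submodule.span_mono ?_ h
      rintro z ⟨w, hw, rfl⟩
      exact ⟨w, by simpa using hw, rfl⟩
  | append_singleton s' c ih =>
    intro p
    rw [show p ++ a :: (s' ++ [c]) = (p ++ a :: s') ++ [c] by simp,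
      lieWord_map_concat f (p ++ a :: s') (by simp) c]
    have h2 := span_lie_subset (R := R) _ (f c) _ (ih p)
    refine Submodule.span_mono ?_ h2
    rintro z ⟨_, ⟨w, hw, rfl⟩, rfl⟩
    refine ⟨w ++ [c], ?_, ?_⟩
    · have := hw.append_right [c]
      simpa using this
    · exact (lieWord_map_concat f (a :: w) (by simp) c).symm



attribute [local instance 100] LieRing.ofAssociativeRing

variable {k : Type*} [CommRing k] {α : Type*} [DecidableEq α]

/-- generators of the monoid algebra of the free monoid -/
noncomputable def gen (i : α) : MonoidAlgebra k (FreeMonoid α) :=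
  MonoidAlgebra.single (FreeMonoid.of i) 1

lemma coeff_lieWord_gen (i : α) :
    ∀ (l : List α), i ∉ l → ∀ w : List α,
      (lieWord ((i :: l).map (gen (k := k)))).coeff (FreeMonoid.ofList (i :: w)) =
        if w = l then 1 else 0 := by
  classical
  intro l
  induction l using List.reverseRecOn with
  | nil =>
    intro _ w
    show (MonoidAlgebra.single (FreeMonoid.of i) (1 : k)).coeff (FreeMonoid.ofList (i :: w)) = _
    rw [← FreeMonoid.ofList_singleton, MonoidAlgebra.coeff_single, Finsupp.single_apply]
    rcases eq_or_ne w [] with rfl | hw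
    · simp
    · rw [if_neg, if_neg hw]
      intro h
      have h2 : ([i] : List α) = i :: w := FreeMonoid.ofList.injective h
      simp only [List.cons.injEq] at h2
      exact hw h2.2.symm
  | append_singleton l' c ih =>
    intro hi w
    have hi' : i ∉ l' := fun h => hi (List.mem_append_left _ h)
    have hic : i ≠ c := fun h => hi (by simp [h])
    rw [show (i :: (l' ++ [c])) = (i :: l') ++ [c] by simp,
      lieWord_map_concat _ (i :: l') (by simp) c, Ring.lie_def, MonoidAlgebra.coeff_sub, Finsupp.sub_apply]
    set X := lieWord ((i :: l').map (gen (k := k))) with hX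
    have hright : (gen (k := k) c * X).coeff (FreeMonoid.ofList (i :: w)) = 0 := by
      apply MonoidAlgebra.single_mul_apply_of_not_exists_mul
      rintro ⟨d, hd⟩
      have : i :: w = c :: FreeMonoid.toList d := congrArg FreeMonoid.toList hd
      exact hic (List.head_eq_of_cons_eq this)
    rw [hright, sub_zero]
    rcases eq_or_ne w [] with rfl | hw
    · rw [if_neg (by simp)]
      apply MonoidAlgebra.mul_single_apply_of_not_exists_mul
      rintro ⟨d, hd⟩
      have : ([i] : List α) = FreeMonoid.toList d ++ [c] := congrArg FreeMonoid.toList hd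
      have h2 : some i = some c := by
        have := congrArg List.getLast? this
        simpa using this
      exact hic (Option.some_injective _ h2)
    · obtain ⟨w', c', rfl⟩ := (List.eq_nil_or_concat' w).resolve_left hw
      by_cases hcc : c' = c
      · subst hcc
        have H : ∀ a : FreeMonoid α, a * FreeMonoid.of c' = FreeMonoid.ofList (i :: (w' ++ [c']))
            ↔ a = FreeMonoid.ofList (i :: w') := by
          intro a
          constructor
          · intro h
            have h2 : FreeMonoid.toList a ++ [c'] = (i :: w') ++ [c'] := by
              have := congrArg FreeMonoid.toList h
              simpa using this
            have := List.append_cancel_right h2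
            exact FreeMonoid.toList.injective (by simpa using this)
          · rintro rfl; rfl
        show (X * MonoidAlgebra.single (FreeMonoid.of c') (1:k)).coeff
            (FreeMonoid.ofList (i :: (w' ++ [c']))) = _
        rw [MonoidAlgebra.coeff_mul_single_eq_coeff_mul (FreeMonoid.ofList (i :: w')) (fun a _ => H a), mul_one, ih hi' w']
        by_cases h : w' = l'
        · subst h; simp
        · rw [if_neg h, if_neg (fun hh => h (List.append_cancel_right hh))]
      · rw [if_neg (by
            intro hh
            apply hcc
            have h3 := congrArg List.getLast? hh
            rw [List.getLast?_concat, List.getLast?_concat] at h3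
            exact Option.some_injective _ h3)]
        apply MonoidAlgebra.mul_single_apply_of_not_exists_mul
        rintro ⟨d, hd⟩
        have h1 : (i :: w') ++ [c'] = FreeMonoid.toList d ++ [c] := congrArg FreeMonoid.toList hd
        have h2 := congrArg List.getLast? h1
        rw [List.getLast?_concat, List.getLast?_concat] at h2
        exact hcc (Option.some_injective _ h2)



lemma map_lieWord {R : Type*} [CommRing R] {L L' : Type*} [LieRing L] [LieRing L']
    [LieAlgebra R L] [LieAlgebra R L'] (f : L →ₗ⁅R⁆ L') (l : List L) :
    f (lieWord l) = lieWord (l.map f) := by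
  cases l with
  | nil => simp [lieWord]
  | cons x xs =>
    simp only [lieWord, List.map_cons]
    induction xs generalizing x with
    | nil => simp
    | cons y ys ih => simpa using ih ⁅x, y⁆

/-- the canonical image of a permutation's left-normed bracket in the free Lie algebra -/
noncomputable def Fw {n : ℕ} (σ : Equiv.Perm (Fin n)) : FreeLieAlgebra (ZMod 2) (Fin n) :=
  lieWord ((List.ofFn σ).map (FreeLieAlgebra.of (ZMod 2)))

noncomputable def epsn (n : ℕ) :
    FreeLieAlgebra (ZMod 2) (Fin n) →ₗ⁅ZMod 2⁆ MonoidAlgebra (ZMod 2) (FreeMonoid (Fin n)) :=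
  FreeLieAlgebra.lift (ZMod 2) (gen (k := ZMod 2))

lemma epsn_Fw {n : ℕ} (σ : Equiv.Perm (Fin n)) :
    epsn n (Fw σ) = lieWord ((List.ofFn σ).map (gen (k := ZMod 2))) := by
  rw [Fw, map_lieWord, List.map_map]
  congr 1
  apply List.map_congr_left
  intro i _
  simp [epsn, FreeLieAlgebra.lift_of_apply]

def tl {m : ℕ} (π : Equiv.Perm (Fin (m + 1))) : List (Fin (m + 1)) :=
  List.ofFn fun i : Fin m => π i.succ

lemma ofFn_perm_eq {m : ℕ} (π : Equiv.Perm (Fin (m + 1))) (hπ : π 0 = 0) :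
    List.ofFn π = (0 : Fin (m + 1)) :: tl π := by
  rw [List.ofFn_succ, hπ]; rfl

lemma zero_not_mem_tl {m : ℕ} (π : Equiv.Perm (Fin (m + 1))) (hπ : π 0 = 0) :
    (0 : Fin (m + 1)) ∉ tl π := by
  rw [tl]
  intro h
  rw [List.mem_ofFn] at h
  obtain ⟨i, hi⟩ := h
  exact Fin.succ_ne_zero i (π.injective (by rw [hπ]; exact hi))

lemma tl_inj {m : ℕ} {π τ : Equiv.Perm (Fin (m + 1))} (hπ : π 0 = 0) (hτ : τ 0 = 0)
    (h : tl π = tl τ) : π = τ := by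
  have h2 := List.ofFn_injective h
  apply Equiv.ext
  intro j
  rcases Fin.eq_zero_or_eq_succ j with rfl | ⟨i, rfl⟩
  · rw [hπ, hτ]
  · exact congrFun h2 i

lemma indep (m : ℕ) : LinearIndependent (ZMod 2)
    (fun π : {π : Equiv.Perm (Fin (m + 1)) // π 0 = 0} => Fw π.1) := by
  classical
  rw [linearIndependent_iff']
  intro s g hsum π0 hπ0
  have h := congrArg (epsn (m + 1)).toLinearMap hsum
  rw [map_sum, map_zero] at h
  simp only [LinearMap.map_smul, LieHom.coe_toLinearMap, epsn_Fw] at h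
  have h2 : ∑ π ∈ s, g π * (lieWord ((List.ofFn π.1).map (gen (k := ZMod 2)))).coeff
      (FreeMonoid.ofList ((0 : Fin (m + 1)) :: tl π0.1)) = 0 := by
    have h2' : (∑ x ∈ s, g x • lieWord ((List.ofFn x.1).map (gen (k := ZMod 2)))).coeff
        (FreeMonoid.ofList ((0 : Fin (m + 1)) :: tl π0.1)) = 0 := by rw [h]; rfl
    rw [MonoidAlgebra.coeff_sum, Finsupp.finset_sum_apply] at h2'
    simpa [MonoidAlgebra.coeff_smul, Finsupp.smul_apply] using h2'
  have h3 : ∀ π ∈ s,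
      g π * (lieWord ((List.ofFn π.1).map (gen (k := ZMod 2)))).coeff
          (FreeMonoid.ofList ((0 : Fin (m + 1)) :: tl π0.1)) =
        if π = π0 then g π else 0 := by
    intro π _
    rw [ofFn_perm_eq π.1 π.prop]
    have h4 := coeff_lieWord_gen (k := ZMod 2) (0 : Fin (m+1)) (tl π.1)
      (zero_not_mem_tl π.1 π.prop) (tl π0.1)
    rw [h4]
    by_cases hh : π = π0
    · subst hh; rw [if_pos rfl, if_pos rfl, mul_one]
    · rw [if_neg, if_neg hh, mul_zero]
      intro hc
      exact hh (Subtype.ext (tl_inj π.prop π0.prop hc.symm))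
  rw [Finset.sum_congr rfl h3, Finset.sum_ite_eq' s π0 g, if_pos hπ0] at h2
  exact h2


lemma Fw_mem_span (m : ℕ) (σ : Equiv.Perm (Fin (m + 1))) :
    Fw σ ∈ Submodule.span (ZMod 2)
      (Set.range fun π : {π : Equiv.Perm (Fin (m + 1)) // π 0 = 0} => Fw π.1) := by
  classical
  have hmem : (0 : Fin (m + 1)) ∈ List.ofFn σ := by
    rw [List.mem_ofFn]
    exact ⟨σ⁻¹ 0, by simp⟩
  obtain ⟨p, s, hps⟩ := List.append_of_mem hmem
  have key := lieWord_mem_span_head (R := ZMod 2) (FreeLieAlgebra.of (ZMod 2))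
    (0 : Fin (m + 1)) s p
  rw [Fw, hps]
  refine Submodule.span_le.mpr ?_ key
  rintro x ⟨w, hw, rfl⟩
  apply Submodule.subset_span
  -- construct the permutation with word `0 :: w`
  have hperm : ((0 : Fin (m + 1)) :: w).Perm (List.ofFn σ) := by
    rw [hps]
    exact (hw.cons 0).trans List.perm_middle.symm
  have hlen : ((0 : Fin (m + 1)) :: w).length = m + 1 :=
    hperm.length_eq.trans (List.length_ofFn (f := σ))
  have hnd : ((0 : Fin (m + 1)) :: w).Nodup :=
    hperm.nodup_iff.mpr (List.nodup_ofFn.mpr σ.injective)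
  set l' : List (Fin (m + 1)) := (0 : Fin (m + 1)) :: w with hl'
  let g : Fin (m + 1) → Fin (m + 1) := fun j => l'.get (Fin.cast hlen.symm j)
  have hginj : Function.Injective g := fun a b hab => by
    have h5 := List.nodup_iff_injective_get.mp hnd hab
    have h6 := congrArg Fin.val h5
    exact Fin.val_injective h6
  let π : Equiv.Perm (Fin (m + 1)) := Equiv.ofBijective g
    ((Finite.injective_iff_bijective).mp hginj)
  have hπ0 : π 0 = 0 := rfl
  have hofn : List.ofFn ⇑π = l' := by
    apply List.ext_get
    · simp [hlen]
    · intro i h1 h2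
      rw [List.get_ofFn]
      rfl
  refine ⟨⟨π, hπ0⟩, ?_⟩
  show lieWord ((List.ofFn ⇑π).map (FreeLieAlgebra.of (ZMod 2))) = _
  rw [hofn]



lemma Fw_eq {n : ℕ} (σ : Equiv.Perm (Fin n)) :
    Fw σ = lieWord (List.ofFn fun i => FreeLieAlgebra.of (ZMod 2) (σ i)) := by
  rw [Fw, List.map_ofFn]; rfl

lemma is2Jacobi_iff {n : ℕ} (T : Set (Equiv.Perm (Fin n))) :
    Is2Jacobi T ↔ ∑ σ ∈ T.toFinite.toFinset, Fw σ = 0 := by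
  constructor
  · intro hT
    have h := hT (FreeLieAlgebra (ZMod 2) (Fin n)) (FreeLieAlgebra.of (ZMod 2))
    rw [← Set.Finite.coe_toFinset T.toFinite, finsum_mem_coe_finset] at h
    rw [← h]
    exact Finset.sum_congr rfl fun σ _ => Fw_eq σ
  · intro h L _ _ _ a
    let φ := FreeLieAlgebra.lift (ZMod 2) a
    have hφ : ∀ σ : Equiv.Perm (Fin n),
        φ (Fw σ) = lieWord (List.ofFn fun i => a (σ i)) := by
      intro σ
      rw [Fw, map_lieWord, List.map_map, List.map_ofFn]
      have : ((⇑φ ∘ FreeLieAlgebra.of (ZMod 2)) ∘ ⇑σ) = fun i => a (σ i) :=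
        funext fun i => by simp [φ, FreeLieAlgebra.lift_of_apply]
      rw [this]
    rw [← Set.Finite.coe_toFinset T.toFinite, finsum_mem_coe_finset]
    have hs : φ.toLinearMap (∑ σ ∈ T.toFinite.toFinset, Fw σ)
        = ∑ σ ∈ T.toFinite.toFinset, φ (Fw σ) := by
      simpa using map_sum φ.toLinearMap Fw T.toFinite.toFinset
    rw [h, map_zero] at hs
    rw [Finset.sum_congr rfl fun σ _ => (hφ σ).symm, ← hs]

noncomputable def Phi (n : ℕ) :
    (Equiv.Perm (Fin n) → ZMod 2) →ₗ[ZMod 2] FreeLieAlgebra (ZMod 2) (Fin n) :=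
  Fintype.linearCombination (ZMod 2) Fw

lemma is2Jacobi_iff_ker {n : ℕ} (T : Set (Equiv.Perm (Fin n))) [DecidablePred (· ∈ T)] :
    Is2Jacobi T ↔ (fun σ => if σ ∈ T then (1 : ZMod 2) else 0) ∈ LinearMap.ker (Phi n) := by
  rw [is2Jacobi_iff, LinearMap.mem_ker, Phi, Fintype.linearCombination_apply]
  have h1 : ∑ σ : Equiv.Perm (Fin n), (if σ ∈ T then (1 : ZMod 2) else 0) • Fw σ
      = ∑ σ ∈ T.toFinite.toFinset, Fw σ := by
    have h2 : T.toFinite.toFinset = Finset.univ.filter (· ∈ T) := by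
      ext σ; simp [Set.Finite.mem_toFinset]
    rw [h2, Finset.sum_filter]
    apply Finset.sum_congr rfl
    intro σ _
    by_cases h : σ ∈ T <;> simp [h]
  rw [h1]


end TwoJacobi

open TwoJacobi in
/-- For `n ≥ 2`, the number of 2-Jacobi subsets of `Sₙ` equals `2^{(n−1)!·(n−1)}`. -/
theorem card_is2Jacobi (n : ℕ) (hn : 2 ≤ n) :
    Nat.card {T : Set (Equiv.Perm (Fin n)) // Is2Jacobi T} =
      2 ^ ((n - 1).factorial * (n - 1)) := by
  classical
  obtain ⟨m, rfl⟩ : ∃ m, n = m + 1 := ⟨n - 1, by omega⟩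
  -- the equivalence with the kernel of Phi
  have h2 : ∀ x : ZMod 2, x = 0 ∨ x = 1 := by decide
  have key : ∀ v : Equiv.Perm (Fin (m + 1)) → ZMod 2,
      (fun σ => if σ ∈ {σ | v σ = 1} then (1 : ZMod 2) else 0) = v := by
    intro v
    funext σ
    by_cases h : v σ = 1
    · simp [Set.mem_setOf_eq, h]
    · have : v σ = 0 := (h2 (v σ)).resolve_right h
      simp [Set.mem_setOf_eq, h, this]
  let e : {T : Set (Equiv.Perm (Fin (m + 1))) // Is2Jacobi T} ≃ LinearMap.ker (Phi (m + 1)) :=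
    { toFun := fun T => ⟨fun σ => if σ ∈ T.1 then 1 else 0, (is2Jacobi_iff_ker T.1).mp T.2⟩
      invFun := fun v => ⟨{σ | v.1 σ = 1}, by
        rw [is2Jacobi_iff_ker, key v.1]; exact v.2⟩
      left_inv := fun T => by
        apply Subtype.ext
        ext σ
        simp only [Set.mem_setOf_eq]
        by_cases h : σ ∈ T.1 <;> simp [h]
      right_inv := fun v => by
        apply Subtype.ext
        funext σ
        by_cases h : v.1 σ = 1
        · simp [h]
        · have h0 : v.1 σ = 0 := (h2 (v.1 σ)).resolve_right h
          simp [h, h0] }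
  rw [Nat.card_congr e]
  -- dimension count
  have hrange : LinearMap.range (Phi (m + 1)) = Submodule.span (ZMod 2)
      (Set.range fun π : {π : Equiv.Perm (Fin (m + 1)) // π 0 = 0} => Fw π.1) := by
    rw [Phi, Fintype.range_linearCombination]
    apply le_antisymm
    · rw [Submodule.span_le]
      rintro x ⟨σ, rfl⟩
      exact Fw_mem_span m σ
    · apply Submodule.span_mono
      rintro x ⟨π, rfl⟩
      exact ⟨π.1, rfl⟩
  have hcard0 : Fintype.card {π : Equiv.Perm (Fin (m + 1)) // π 0 = 0} = m.factorial := by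
    have e2 : {π : Equiv.Perm (Fin (m + 1)) // π 0 = 0} ≃
        {x : Fin (m + 1) × Equiv.Perm (Fin m) // x.1 = 0} := by
      apply Equiv.Perm.decomposeFin.subtypeEquiv
      intro π
      obtain ⟨p, τ, hx⟩ : ∃ p τ, Equiv.Perm.decomposeFin π = (p, τ) := ⟨_, _, rfl⟩
      have hπ : π = Equiv.Perm.decomposeFin.symm (p, τ) := by
        rw [← hx, Equiv.symm_apply_apply]
      rw [hπ, Equiv.Perm.decomposeFin_symm_apply_zero, Equiv.apply_symm_apply]
    have e3 : {x : Fin (m + 1) × Equiv.Perm (Fin m) // x.1 = 0} ≃ Equiv.Perm (Fin m) :=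
      { toFun := fun x => x.1.2
        invFun := fun π => ⟨(0, π), rfl⟩
        left_inv := fun x => by
          apply Subtype.ext
          exact Prod.ext x.2.symm rfl
        right_inv := fun π => rfl }
    rw [Fintype.card_congr (e2.trans e3), Fintype.card_perm, Fintype.card_fin]
  have hfr : Module.finrank (ZMod 2) (LinearMap.range (Phi (m + 1))) = m.factorial := by
    rw [hrange, finrank_span_eq_card (indep m), hcard0]
  have hdom : Module.finrank (ZMod 2) (Equiv.Perm (Fin (m + 1)) → ZMod 2)
      = (m + 1).factorial := by
    rw [Module.finrank_pi, Fintype.card_perm, Fintype.card_fin]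
  have hrn := LinearMap.finrank_range_add_finrank_ker (Phi (m + 1))
  rw [hfr, hdom] at hrn
  have hker : Module.finrank (ZMod 2) (LinearMap.ker (Phi (m + 1))) = m.factorial * m := by
    have h1 : (m + 1).factorial = (m + 1) * m.factorial := Nat.factorial_succ m
    have h2 : (m + 1) * m.factorial = m * m.factorial + m.factorial := by ring
    have h3 : m.factorial * m = m * m.factorial := Nat.mul_comm _ _
    omega
  letI : Fintype (LinearMap.ker (Phi (m + 1))) := Fintype.ofFinite _
  rw [Nat.card_eq_fintype_card, Module.card_eq_pow_finrank (K := ZMod 2), ZMod.card, hker]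
  simp
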